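/- arXiv:2308.02107 — 6 statements merged into one kernel-verified Lean document; each statement's English description precedes it below -/
import Mathlib

section
/- For every real s ≥ 3 there exists a constant C_s > 0, depending only on s, such that for all ξ, η ∈ ℝ² one has | |ξ|^s − |η|^s − |ξ−η|^s − s((ξ−η)·η)|ξ−η|^{s−2} | ≤ C_s ( |η|² |ξ−η|^{s−2} + |ξ−η| |η|^{s−1} ). -/
open Real

set_option maxHeartbeats 1000000 in
lemma mvt_rpow (q : ℝ) (hq : 0 < q) (x y : ℝ) (hx : 0 ≤ x) (hxy : x ≤ y) :
    ∃ c, x ≤ c ∧ c ≤ y ∧ y ^ q - x ^ q = q * c ^ (q - 1) * (y - x) := by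
  rcases eq_or_lt_of_le hxy with rfl | h
  · exact ⟨x, le_refl _, le_refl _, by ring⟩
  · have hcont : ContinuousOn (fun u : ℝ => u ^ q) (Set.Icc x y) := fun u _ =>
      (Real.continuousAt_rpow_const u q (Or.inr hq.le)).continuousWithinAt
    have hderiv : ∀ u ∈ Set.Ioo x y, HasDerivAt (fun u : ℝ => u ^ q) (q * u ^ (q - 1)) u :=
      fun u hu => Real.hasDerivAt_rpow_const (Or.inl (by have := hu.1; nlinarith))
    obtain ⟨c, hc, hEq⟩ := exists_hasDerivAt_eq_slope _ _ h hcont hderiv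
    refine ⟨c, hc.1.le, hc.2.le, ?_⟩
    rw [eq_div_iff (by linarith : y - x ≠ 0)] at hEq
    linarith [hEq]

lemma mvt_rpow' (q : ℝ) (hq : 0 < q) (x y : ℝ) (hx : 0 ≤ x) (hy : 0 ≤ y) :
    ∃ c, min x y ≤ c ∧ c ≤ max x y ∧ y ^ q - x ^ q = q * c ^ (q - 1) * (y - x) := by
  rcases le_total x y with h | h
  · obtain ⟨c, h1, h2, h3⟩ := mvt_rpow q hq x y hx h
    exact ⟨c, (min_le_left x y).trans h1, h2.trans (le_max_right x y), h3⟩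
  · obtain ⟨c, h1, h2, h3⟩ := mvt_rpow q hq y x hy h
    exact ⟨c, (min_le_right x y).trans h1, h2.trans (le_max_left x y), by linarith [h3]⟩

lemma rpow_two' (x : ℝ) : x ^ (2:ℝ) = x ^ 2 := by
  rw [← Real.rpow_natCast x 2]; norm_num

lemma sqr_rpow (x : ℝ) (hx : 0 ≤ x) (r : ℝ) : (x ^ 2 : ℝ) ^ r = x ^ (2 * r) := by
  rw [← rpow_two', ← Real.rpow_mul hx]

lemma rpow_split (x : ℝ) (hx : 0 ≤ x) (u v w : ℝ) (huv : u + v ≠ 0) (hw : w = u + v) :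
    x ^ w = x ^ u * x ^ v := by rw [hw, Real.rpow_add' hx huv]


section polyfacts
variable {s a b t : ℝ}

lemma pfA (hx : 0 ≤ a) : a^2 ≤ 4*a^2 := by nlinarith
lemma pfB (hb : 0 ≤ b) (hba : b ≤ a) (htr : t ≤ a*b) : a^2+2*t+b^2 ≤ 4*a^2 := by nlinarith
lemma pfB' (ha : 0 ≤ a) (hab : a ≤ b) (htr : t ≤ a*b) : a^2+2*t+b^2 ≤ 4*b^2 := by nlinarith
lemma pfC (hb : 0 ≤ b) (hba : b ≤ a) : (a-b)^2 ≤ a^2 := by nlinarith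
lemma pfD (htl : -(a*b) ≤ t) : (a-b)^2 ≤ a^2+2*t+b^2 := by nlinarith
lemma pfE (hb : 0 ≤ b) (h2b : 2*b ≤ a) : a^2/4 ≤ (a-b)^2 := by nlinarith
lemma pfF (hx : 0 ≤ a) : a^2/4 ≤ a^2 := by nlinarith
lemma pfG (hb : 0 ≤ b) (hba : b ≤ a) (htr : t ≤ a*b) : a^2+2*t+b^2 ≤ a^2+3*(a*b) := by nlinarith
lemma pfH (hb : 0 ≤ b) (hba : b ≤ a) (htl : -(a*b) ≤ t) : a^2-3*(a*b) ≤ a^2+2*t+b^2 := by nlinarith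
lemma pfI (ha : 0 ≤ a) (hb : 0 ≤ b) : a^2 ≤ a^2+3*(a*b) := by nlinarith
lemma pfJ (ha : 0 ≤ a) (hb : 0 ≤ b) : a^2-3*(a*b) ≤ a^2 := by nlinarith
lemma pfK (ha : 0 ≤ a) (hab : a ≤ b) (htl : -(a*b) ≤ t) (htr : t ≤ a*b) : |a^2+2*t| ≤ 3*(a*b) := by
  rw [abs_le]; constructor <;> nlinarith
lemma pfs1 (hs : 3 ≤ s) : 3*s*(s/2-1) ≤ 99*s^2 := by nlinarith
lemma pfs2 (hs : 3 ≤ s) : 2*s ≤ 99*s^2 := by nlinarith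
lemma pfs3 (hs : 3 ≤ s) : s/2 + 1 ≤ s^2 := by nlinarith
lemma pfs4 (hs : 3 ≤ s) : 3*(s/2) + 1 + s ≤ 100*s^2 := by nlinarith
lemma pfT (ha : 0 ≤ a) (hb : 0 ≤ b) (htl : -(a*b) ≤ t) : 0 ≤ a^2 + 2*t + b^2 := by nlinarith [sq_nonneg (a-b)]
end polyfacts

set_option maxHeartbeats 1000000 in
lemma key_case1 (s : ℝ) (hs : 3 ≤ s) (a b t : ℝ) (ha : 0 ≤ a) (hb : 0 ≤ b)
    (htl : -(a*b) ≤ t) (htr : t ≤ a*b) (ht : |t| ≤ a * b)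
    (hA2 : (0:ℝ) ≤ a^2 + 2*t + b^2)
    (hQ1 : (1:ℝ) ≤ (4:ℝ)^s)
    (h44 : (4:ℝ)^(s/2-1) ≤ (4:ℝ)^s)
    (h16 : (4:ℝ)^s * (4:ℝ)^s = (16:ℝ)^s)
    (hQQ : (4:ℝ)^s ≤ (16:ℝ)^s)
    (hX : (0:ℝ) ≤ b^2 * a^(s-2)) (hY : (0:ℝ) ≤ a * b^(s-1))
    (hbb : b^(s-2) * b = b^(s-1)) (hab : a ≤ b) :
    |(a^2 + 2*t + b^2) ^ (s/2) - b ^ s - a ^ s - s * t * a ^ (s-2)|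
      ≤ (100 * s^2 * (16:ℝ)^s) * (b^2 * a^(s-2) + a * b^(s-1)) := by
  obtain ⟨c, hc1, hc2, hEq⟩ := mvt_rpow' (s/2) (by linarith) (b^2) (a^2+2*t+b^2)
    (by positivity) hA2
  have hb2s : ((b^2 : ℝ)) ^ (s/2) = b ^ s := by
    rw [sqr_rpow b hb, show 2*(s/2) = s by ring]
  have hc0 : 0 ≤ c := le_trans (le_min (by positivity) hA2) hc1
  have hcmax : c ≤ 4*b^2 := hc2.trans (max_le (pfA hb) (pfB' ha hab htr))
  have hcp : c^(s/2-1) ≤ (4:ℝ)^(s/2-1) * b^(s-2) := by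
    calc c^(s/2-1) ≤ (4*b^2)^(s/2-1) := Real.rpow_le_rpow hc0 hcmax (by linarith)
      _ = (4:ℝ)^(s/2-1) * b^(s-2) := by
        rw [Real.mul_rpow (by norm_num) (by positivity), sqr_rpow b hb,
          show 2*(s/2-1) = s-2 by ring]
  rw [hb2s] at hEq
  have key1 : (a^2 + 2*t + b^2) ^ (s/2) - b ^ s - a ^ s - s * t * a ^ (s-2)
      = (s/2) * c^(s/2-1) * (a^2+2*t) - a ^ s - s * t * a ^ (s-2) := by
    linear_combination hEq
  rw [key1]
  have hT : |(s/2) * c^(s/2-1) * (a^2+2*t)| ≤ (s/2) * ((4:ℝ)^(s/2-1) * b^(s-2)) * (3*(a*b)) := by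
    rw [abs_mul, abs_mul, abs_of_nonneg (by linarith : (0:ℝ) ≤ s/2),
      abs_of_nonneg (Real.rpow_nonneg hc0 _)]
    have h1 : |a^2+2*t| ≤ 3*(a*b) := pfK ha hab htl htr
    exact mul_le_mul (mul_le_mul_of_nonneg_left hcp (by linarith)) h1 (abs_nonneg _)
      (by positivity)
  have has : a ^ s ≤ a * b^(s-1) := by
    have e1 : a^s = a * a^(s-1) := by
      rw [rpow_split a ha 1 (s-1) s (by intro h; linarith) (by ring), Real.rpow_one]
    have e2 : a^(s-1) ≤ b^(s-1) := Real.rpow_le_rpow ha hab (by linarith)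
    rw [e1]; exact mul_le_mul_of_nonneg_left e2 ha
  have hw : |s * t * a^(s-2)| ≤ s * (a * b^(s-1)) := by
    rw [abs_mul, abs_mul, abs_of_nonneg (by linarith : (0:ℝ) ≤ s),
      abs_of_nonneg (Real.rpow_nonneg ha _)]
    have e2 : a^(s-2) ≤ b^(s-2) := Real.rpow_le_rpow ha hab (by linarith)
    have h3 : |t| * a^(s-2) ≤ (a*b) * b^(s-2) := by
      apply mul_le_mul ht e2 (Real.rpow_nonneg ha _) (by positivity)
    have h4 : (a*b) * b^(s-2) = a * b^(s-1) := by rw [← hbb]; ring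
    have h5 := mul_le_mul_of_nonneg_left (h3.trans_eq h4) (show (0:ℝ) ≤ s by linarith)
    linarith
  have hTY : (s/2) * ((4:ℝ)^(s/2-1) * b^(s-2)) * (3*(a*b))
      = (3*(s/2)*(4:ℝ)^(s/2-1)) * (a * b^(s-1)) := by
    rw [← hbb]; ring
  have tri : |(s/2) * c^(s/2-1) * (a^2+2*t) - a ^ s - s * t * a ^ (s-2)|
      ≤ |(s/2) * c^(s/2-1) * (a^2+2*t)| + a ^ s + |s * t * a ^ (s-2)| := by
    have h5 := abs_add_three ((s/2) * c^(s/2-1) * (a^2+2*t)) (-(a^s)) (-(s * t * a^(s-2)))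
    rw [abs_neg, abs_neg, abs_of_nonneg (Real.rpow_nonneg ha s)] at h5
    calc |(s/2) * c^(s/2-1) * (a^2+2*t) - a ^ s - s * t * a ^ (s-2)|
        = |(s/2) * c^(s/2-1) * (a^2+2*t) + -(a^s) + -(s * t * a^(s-2))| := by ring_nf
      _ ≤ _ := h5
  have hcoef : 3*(s/2)*(4:ℝ)^(s/2-1) + 1 + s ≤ 100 * s^2 * (16:ℝ)^s := by
    have e1 : 3*(s/2)*(4:ℝ)^(s/2-1) ≤ (3*(s/2))*(16:ℝ)^s :=
      mul_le_mul_of_nonneg_left (h44.trans hQQ) (by linarith)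
    have e2 : (1:ℝ) ≤ (16:ℝ)^s := le_trans hQ1 hQQ
    have e3 : s * 1 ≤ s * (16:ℝ)^s := mul_le_mul_of_nonneg_left e2 (by linarith)
    have hpoly : 3*(s/2) + 1 + s ≤ 100*s^2 := pfs4 hs
    have e4 : (3*(s/2) + 1 + s) * (16:ℝ)^s ≤ 100*s^2*(16:ℝ)^s :=
      mul_le_mul_of_nonneg_right hpoly (by positivity)
    linarith
  calc |(s/2) * c^(s/2-1) * (a^2+2*t) - a ^ s - s * t * a ^ (s-2)|
      ≤ |(s/2) * c^(s/2-1) * (a^2+2*t)| + a ^ s + |s * t * a ^ (s-2)| := tri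
    _ ≤ (3*(s/2)*(4:ℝ)^(s/2-1)) * (a * b^(s-1)) + a * b^(s-1) + s * (a * b^(s-1)) := by
        rw [← hTY]; exact add_le_add (add_le_add hT has) hw
    _ = (3*(s/2)*(4:ℝ)^(s/2-1) + 1 + s) * (a * b^(s-1)) := by ring
    _ ≤ (100 * s^2 * (16:ℝ)^s) * (a * b^(s-1)) := mul_le_mul_of_nonneg_right hcoef hY
    _ ≤ (100 * s^2 * (16:ℝ)^s) * (b^2 * a^(s-2) + a * b^(s-1)) := by
        have hC0 : (0:ℝ) ≤ 100 * s^2 * (16:ℝ)^s := by positivity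
        rw [mul_add]; linarith [mul_nonneg hC0 hX]

set_option maxHeartbeats 1000000 in
lemma key_case2 (s : ℝ) (hs : 3 ≤ s) (a b t : ℝ) (ha : 0 ≤ a) (hb : 0 ≤ b)
    (htl : -(a*b) ≤ t) (htr : t ≤ a*b) (ht : |t| ≤ a * b)
    (hA2 : (0:ℝ) ≤ a^2 + 2*t + b^2)
    (hQ1 : (1:ℝ) ≤ (4:ℝ)^s)
    (h44 : (4:ℝ)^(s/2-1) ≤ (4:ℝ)^s)
    (h16 : (4:ℝ)^s * (4:ℝ)^s = (16:ℝ)^s)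
    (hQQ : (4:ℝ)^s ≤ (16:ℝ)^s)
    (hX : (0:ℝ) ≤ b^2 * a^(s-2)) (hY : (0:ℝ) ≤ a * b^(s-1))
    (hbb : b^(s-2) * b = b^(s-1)) (hba : b ≤ a) :
    |(a^2 + 2*t + b^2) ^ (s/2) - b ^ s - a ^ s - s * t * a ^ (s-2)|
      ≤ (100 * s^2 * (16:ℝ)^s) * (b^2 * a^(s-2) + a * b^(s-1)) := by
  obtain ⟨c, hc1, hc2, hEq⟩ := mvt_rpow' (s/2) (by linarith) (a^2) (a^2+2*t+b^2)
    (by positivity) hA2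
  have ha2s : ((a^2 : ℝ)) ^ (s/2) = a ^ s := by
    rw [sqr_rpow a ha, show 2*(s/2) = s by ring]
  have ha2s2 : ((a^2 : ℝ)) ^ (s/2-1) = a ^ (s-2) := by
    rw [sqr_rpow a ha, show 2*(s/2-1) = s-2 by ring]
  have hc0 : 0 ≤ c := le_trans (le_min (by positivity) hA2) hc1
  have hcmax : c ≤ 4*a^2 := hc2.trans (max_le (pfA ha) (pfB hb hba htr))
  have hcp : c^(s/2-1) ≤ (4:ℝ)^(s/2-1) * a^(s-2) := by
    calc c^(s/2-1) ≤ (4*a^2)^(s/2-1) := Real.rpow_le_rpow hc0 hcmax (by linarith)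
      _ = (4:ℝ)^(s/2-1) * a^(s-2) := by
        rw [Real.mul_rpow (by norm_num) (by positivity), sqr_rpow a ha,
          show 2*(s/2-1) = s-2 by ring]
  rw [ha2s] at hEq
  have key2 : (a^2 + 2*t + b^2) ^ (s/2) - b ^ s - a ^ s - s * t * a ^ (s-2)
      = s*t*(c^(s/2-1) - a^(s-2)) + (s/2)*c^(s/2-1)*b^2 - b^s := by
    rw [← ha2s2]; linear_combination hEq
  rw [key2]
  have hC0nn : (0:ℝ) ≤ s^2*(16:ℝ)^s := by positivity
  have h99 : (0:ℝ) ≤ 99*s^2*(16:ℝ)^s := by positivity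
  have hTB : (s/2)*c^(s/2-1)*b^2 ≤ ((s/2)*(4:ℝ)^(s/2-1)) * (b^2 * a^(s-2)) := by
    have h1 : (s/2)*c^(s/2-1) ≤ (s/2)*((4:ℝ)^(s/2-1)*a^(s-2)) :=
      mul_le_mul_of_nonneg_left hcp (by linarith)
    calc (s/2)*c^(s/2-1)*b^2 ≤ (s/2)*((4:ℝ)^(s/2-1)*a^(s-2))*b^2 :=
          mul_le_mul_of_nonneg_right h1 (sq_nonneg b)
      _ = ((s/2)*(4:ℝ)^(s/2-1)) * (b^2 * a^(s-2)) := by ring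
  have hTBnn : (0:ℝ) ≤ (s/2)*c^(s/2-1)*b^2 := by positivity
  have hbs : b^s ≤ b^2 * a^(s-2) := by
    have e1 : b^s = b^(2:ℝ) * b^(s-2) :=
      rpow_split b hb 2 (s-2) s (by intro h; linarith) (by ring)
    have e2 : b^(s-2) ≤ a^(s-2) := Real.rpow_le_rpow hb hba (by linarith)
    rw [e1, rpow_two']
    exact mul_le_mul_of_nonneg_left e2 (sq_nonneg b)
  have hbsnn : (0:ℝ) ≤ b^s := Real.rpow_nonneg hb s
  have hTA : |s*t*(c^(s/2-1) - a^(s-2))| ≤ (99*s^2*(16:ℝ)^s) * (b^2*a^(s-2) + a*b^(s-1)) := by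
    rcases le_or_gt (2*b) a with h2b | h2b
    · -- subcase 2a : 2b ≤ a
      rcases eq_or_lt_of_le ha with h0 | ha0
      · have ht0 : t = 0 := by
          have h7 : |t| ≤ 0 := by rw [← h0] at ht; simpa using ht
          simpa using le_antisymm h7 (abs_nonneg t)
        rw [ht0]
        simp only [mul_zero, zero_mul, abs_zero]
        positivity
      · obtain ⟨d, hd1, hd2, hEq2⟩ := mvt_rpow' (s/2-1) (by linarith) (a^2) c
          (by positivity) hc0
        rw [show s/2-1-1 = s/2-2 by ring] at hEq2
        have hclow : (a-b)^2 ≤ c := le_trans (le_min (pfC hb hba) (pfD htl)) hc1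
        have hdlow : a^2/4 ≤ d :=
          le_trans (le_min (pfF ha) (le_trans (pfE hb h2b) hclow)) hd1
        have hdhigh : d ≤ 4*a^2 := hd2.trans (max_le (pfA ha) hcmax)
        have hd0 : (0:ℝ) < d := lt_of_lt_of_le (by positivity) hdlow
        have hca : |c - a^2| ≤ 3*(a*b) := by
          have hmax : max (a^2) (a^2+2*t+b^2) ≤ a^2 + 3*(a*b) :=
            max_le (pfI ha hb) (pfG hb hba htr)
          have hmin : a^2 - 3*(a*b) ≤ min (a^2) (a^2+2*t+b^2) :=
            le_min (pfJ ha hb) (pfH hb hba htl)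
          have u1 := le_trans hmin hc1
          have u2 := hc2.trans hmax
          rw [abs_le]; constructor <;> linarith
        have hdp : d^(s/2-2) ≤ (4:ℝ)^s * a^(s-4) := by
          rcases le_or_gt 2 (s/2) with hp2 | hp2
          · calc d^(s/2-2) ≤ (4*a^2)^(s/2-2) :=
                Real.rpow_le_rpow hd0.le hdhigh (by linarith)
              _ = (4:ℝ)^(s/2-2) * a^(s-4) := by
                rw [Real.mul_rpow (by norm_num) (by positivity), sqr_rpow a ha,
                  show 2*(s/2-2) = s-4 by ring]
              _ ≤ (4:ℝ)^s * a^(s-4) := mul_le_mul_of_nonneg_right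
                  (Real.rpow_le_rpow_of_exponent_le (by norm_num) (by linarith))
                  (Real.rpow_nonneg ha _)
          · calc d^(s/2-2) ≤ (a^2/4)^(s/2-2) :=
                Real.rpow_le_rpow_of_nonpos (by positivity) hdlow (by linarith)
              _ = a^(s-4) / (4:ℝ)^(s/2-2) := by
                rw [Real.div_rpow (by positivity) (by norm_num), sqr_rpow a ha,
                  show 2*(s/2-2) = s-4 by ring]
              _ = a^(s-4) * (4:ℝ)^(2-s/2) := by
                rw [show (2-s/2) = -(s/2-2) by ring, Real.rpow_neg (by norm_num)]; ring
              _ ≤ a^(s-4) * (4:ℝ)^s := mul_le_mul_of_nonneg_left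
                  (Real.rpow_le_rpow_of_exponent_le (by norm_num) (by linarith))
                  (Real.rpow_nonneg ha _)
              _ = (4:ℝ)^s * a^(s-4) := mul_comm _ _
        have haaa : a^(s-2) = a^2 * a^(s-4) := by
          rw [rpow_split a ha 2 (s-4) (s-2) (by intro h; linarith) (by ring), rpow_two']
        have hdelta : |c^(s/2-1) - a^(s-2)| ≤ (s/2-1)*((4:ℝ)^s*a^(s-4))*(3*(a*b)) := by
          rw [← ha2s2, hEq2, abs_mul, abs_mul,
            abs_of_nonneg (show (0:ℝ) ≤ s/2-1 by linarith),
            abs_of_nonneg (Real.rpow_nonneg hd0.le _)]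
          exact mul_le_mul (mul_le_mul_of_nonneg_left hdp (show (0:ℝ) ≤ s/2-1 by linarith)) hca
            (abs_nonneg _)
            (mul_nonneg (show (0:ℝ) ≤ s/2-1 by linarith) (by positivity))
        have hpoly : 3*s*(s/2-1) ≤ 99*s^2 := pfs1 hs
        have hc4 : 3*s*(s/2-1)*(4:ℝ)^s ≤ 99*s^2*(16:ℝ)^s := by
          calc 3*s*(s/2-1)*(4:ℝ)^s ≤ 99*s^2*(4:ℝ)^s :=
              mul_le_mul_of_nonneg_right hpoly (by positivity)
            _ ≤ 99*s^2*(16:ℝ)^s := by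
              have h8 := mul_le_mul_of_nonneg_left hQQ (by positivity : (0:ℝ) ≤ 99*s^2)
              linarith
        calc |s*t*(c^(s/2-1) - a^(s-2))|
            = s * |t| * |c^(s/2-1) - a^(s-2)| := by
              rw [abs_mul, abs_mul, abs_of_nonneg (show (0:ℝ) ≤ s by linarith)]
          _ ≤ s*(a*b)*((s/2-1)*((4:ℝ)^s*a^(s-4))*(3*(a*b))) := by
              exact mul_le_mul (mul_le_mul_of_nonneg_left ht (by linarith)) hdelta
                (abs_nonneg _) (by positivity)
          _ = (3*s*(s/2-1)*(4:ℝ)^s) * (b^2*(a^2*a^(s-4))) := by ring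
          _ = (3*s*(s/2-1)*(4:ℝ)^s) * (b^2*a^(s-2)) := by rw [← haaa]
          _ ≤ (99*s^2*(16:ℝ)^s) * (b^2*a^(s-2)) := mul_le_mul_of_nonneg_right hc4 hX
          _ ≤ (99*s^2*(16:ℝ)^s) * (b^2*a^(s-2) + a*b^(s-1)) := by
              rw [mul_add]; linarith [mul_nonneg h99 hY]
    · -- subcase 2b : a < 2b
      have hone : (1:ℝ) ≤ (4:ℝ)^(s/2-1) := Real.one_le_rpow (by norm_num) (by linarith)
      have hdelta : |c^(s/2-1) - a^(s-2)| ≤ 2*((4:ℝ)^(s/2-1)*a^(s-2)) := by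
        have h1 : a^(s-2) ≤ (4:ℝ)^(s/2-1)*a^(s-2) := by
          nth_rewrite 1 [← one_mul (a^(s-2))]
          exact mul_le_mul_of_nonneg_right hone (Real.rpow_nonneg ha _)
        calc |c^(s/2-1) - a^(s-2)| ≤ |c^(s/2-1)| + |a^(s-2)| := abs_sub _ _
          _ = c^(s/2-1) + a^(s-2) := by
              rw [abs_of_nonneg (Real.rpow_nonneg hc0 _),
                abs_of_nonneg (Real.rpow_nonneg ha _)]
          _ ≤ 2*((4:ℝ)^(s/2-1)*a^(s-2)) := by linarith [hcp]
      have hae : a^(s-2) ≤ (2:ℝ)^(s-2)*b^(s-2) := by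
        calc a^(s-2) ≤ (2*b)^(s-2) := Real.rpow_le_rpow ha h2b.le (by linarith)
          _ = (2:ℝ)^(s-2)*b^(s-2) := Real.mul_rpow (by norm_num) hb
      have h2a : (2:ℝ)^(s-2) ≤ (4:ℝ)^(s-2) :=
        Real.rpow_le_rpow (by norm_num) (by norm_num) (by linarith)
      have h2c : (4:ℝ)^(s-2) ≤ (4:ℝ)^s :=
        Real.rpow_le_rpow_of_exponent_le (by norm_num) (by linarith)
      have h2nn : (0:ℝ) ≤ (2:ℝ)^(s-2) := Real.rpow_nonneg (by norm_num) _
      calc |s*t*(c^(s/2-1) - a^(s-2))|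
          = s * |t| * |c^(s/2-1) - a^(s-2)| := by
            rw [abs_mul, abs_mul, abs_of_nonneg (show (0:ℝ) ≤ s by linarith)]
        _ ≤ s*(a*b)*(2*((4:ℝ)^(s/2-1)*a^(s-2))) := by
            exact mul_le_mul (mul_le_mul_of_nonneg_left ht (by linarith)) hdelta
              (abs_nonneg _) (by positivity)
        _ ≤ s*(a*b)*(2*((4:ℝ)^(s/2-1)*((2:ℝ)^(s-2)*b^(s-2)))) := by
            apply mul_le_mul_of_nonneg_left _ (by positivity : (0:ℝ) ≤ s*(a*b))
            have h7 := mul_le_mul_of_nonneg_left hae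
              (by positivity : (0:ℝ) ≤ (4:ℝ)^(s/2-1))
            linarith
        _ = (2*s*((4:ℝ)^(s/2-1)*(2:ℝ)^(s-2))) * (a*(b^(s-2)*b)) := by ring
        _ = (2*s*((4:ℝ)^(s/2-1)*(2:ℝ)^(s-2))) * (a*b^(s-1)) := by rw [hbb]
        _ ≤ (99*s^2*(16:ℝ)^s) * (a*b^(s-1)) := by
            apply mul_le_mul_of_nonneg_right _ hY
            have hprod : (4:ℝ)^(s/2-1)*(2:ℝ)^(s-2) ≤ (16:ℝ)^s := by
              calc (4:ℝ)^(s/2-1)*(2:ℝ)^(s-2) ≤ (4:ℝ)^s*(4:ℝ)^s :=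
                  mul_le_mul h44 (h2a.trans h2c) h2nn (Real.rpow_nonneg (by norm_num) _)
                _ = (16:ℝ)^s := h16
            have hpoly : 2*s ≤ 99*s^2 := pfs2 hs
            calc 2*s*((4:ℝ)^(s/2-1)*(2:ℝ)^(s-2)) ≤ 2*s*(16:ℝ)^s :=
                mul_le_mul_of_nonneg_left hprod (by linarith)
              _ ≤ 99*s^2*(16:ℝ)^s := mul_le_mul_of_nonneg_right hpoly (by positivity)
        _ ≤ (99*s^2*(16:ℝ)^s) * (b^2*a^(s-2) + a*b^(s-1)) := by
            rw [mul_add]; linarith [mul_nonneg h99 hX]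
  have tri : |s*t*(c^(s/2-1) - a^(s-2)) + (s/2)*c^(s/2-1)*b^2 - b^s|
      ≤ |s*t*(c^(s/2-1) - a^(s-2))| + (s/2)*c^(s/2-1)*b^2 + b^s := by
    have h5 := abs_add_three (s*t*(c^(s/2-1) - a^(s-2))) ((s/2)*c^(s/2-1)*b^2) (-(b^s))
    rw [abs_neg, abs_of_nonneg hTBnn, abs_of_nonneg hbsnn] at h5
    calc |s*t*(c^(s/2-1) - a^(s-2)) + (s/2)*c^(s/2-1)*b^2 - b^s|
        = |s*t*(c^(s/2-1) - a^(s-2)) + (s/2)*c^(s/2-1)*b^2 + -(b^s)| := by ring_nf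
      _ ≤ _ := h5
  have hKB : (s/2)*(4:ℝ)^(s/2-1) + 1 ≤ s^2*(16:ℝ)^s := by
    have e1 : (s/2)*(4:ℝ)^(s/2-1) ≤ (s/2)*(16:ℝ)^s :=
      mul_le_mul_of_nonneg_left (h44.trans hQQ) (by linarith)
    have e2 : (1:ℝ) ≤ (16:ℝ)^s := le_trans hQ1 hQQ
    have hpoly : s/2 + 1 ≤ s^2 := pfs3 hs
    have e3 : (s/2 + 1)*(16:ℝ)^s ≤ s^2*(16:ℝ)^s :=
      mul_le_mul_of_nonneg_right hpoly (by positivity)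
    linarith
  have h6 := mul_le_mul_of_nonneg_right hKB hX
  calc |s*t*(c^(s/2-1) - a^(s-2)) + (s/2)*c^(s/2-1)*b^2 - b^s|
      ≤ |s*t*(c^(s/2-1) - a^(s-2))| + (s/2)*c^(s/2-1)*b^2 + b^s := tri
    _ ≤ (99*s^2*(16:ℝ)^s) * (b^2*a^(s-2) + a*b^(s-1))
        + ((s/2)*(4:ℝ)^(s/2-1)) * (b^2*a^(s-2)) + b^2*a^(s-2) := by
        linarith [hTA, hTB, hbs]
    _ ≤ (100 * s^2 * (16:ℝ)^s) * (b^2 * a^(s-2) + a * b^(s-1)) := by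
        linarith [h6, mul_nonneg hC0nn hY]

lemma key_bound (s : ℝ) (hs : 3 ≤ s) (a b t : ℝ) (ha : 0 ≤ a) (hb : 0 ≤ b)
    (ht : |t| ≤ a * b) :
    |(a^2 + 2*t + b^2) ^ (s/2) - b ^ s - a ^ s - s * t * a ^ (s-2)|
      ≤ (100 * s^2 * (16:ℝ)^s) * (b^2 * a^(s-2) + a * b^(s-1)) := by
  obtain ⟨htl, htr⟩ := abs_le.mp ht
  have hA2 : (0:ℝ) ≤ a^2 + 2*t + b^2 := pfT ha hb htl
  have hQ1 : (1:ℝ) ≤ (4:ℝ)^s := Real.one_le_rpow (by norm_num) (by linarith)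
  have h44 : (4:ℝ)^(s/2-1) ≤ (4:ℝ)^s :=
    Real.rpow_le_rpow_of_exponent_le (by norm_num) (by linarith)
  have h16 : (4:ℝ)^s * (4:ℝ)^s = (16:ℝ)^s := by
    rw [show (16:ℝ) = 4*4 by norm_num, Real.mul_rpow (by norm_num) (by norm_num)]
  have hQQ : (4:ℝ)^s ≤ (16:ℝ)^s := by
    calc (4:ℝ)^s = (4:ℝ)^s * 1 := (mul_one _).symm
      _ ≤ (4:ℝ)^s * (4:ℝ)^s := mul_le_mul_of_nonneg_left hQ1 (by positivity)
      _ = (16:ℝ)^s := h16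
  have hX : (0:ℝ) ≤ b^2 * a^(s-2) := by positivity
  have hY : (0:ℝ) ≤ a * b^(s-1) := by positivity
  have hbb : b^(s-2) * b = b^(s-1) := by
    rw [rpow_split b hb (s-2) 1 (s-1) (by intro h; linarith) (by ring), Real.rpow_one]
  rcases le_total a b with hab | hba
  · exact key_case1 s hs a b t ha hb htl htr ht hA2 hQ1 h44 h16 hQQ hX hY hbb hab
  · exact key_case2 s hs a b t ha hb htl htr ht hA2 hQ1 h44 h16 hQQ hX hY hbb hba

/-- For every real `s ≥ 3` there exists a constant `C_s > 0` such that for all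
`ξ, η ∈ ℝ²`:
`| |ξ|^s − |η|^s − |ξ−η|^s − s((ξ−η)·η)|ξ−η|^{s−2} | ≤ C_s (|η|²|ξ−η|^{s−2} + |ξ−η||η|^{s−1})`. -/
theorem stmt_0 (s : ℝ) (hs : 3 ≤ s) :
    ∃ C : ℝ, 0 < C ∧ ∀ ξ η : EuclideanSpace ℝ (Fin 2),
      |‖ξ‖ ^ s - ‖η‖ ^ s - ‖ξ - η‖ ^ s
          - s * (inner ℝ (ξ - η) η : ℝ) * ‖ξ - η‖ ^ (s - 2)|
        ≤ C * (‖η‖ ^ 2 * ‖ξ - η‖ ^ (s - 2) + ‖ξ - η‖ * ‖η‖ ^ (s - 1)) := by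
  refine ⟨100 * s^2 * (16:ℝ)^s, by positivity, fun ξ η => ?_⟩
  have hnorm : ‖ξ‖^2 = ‖ξ-η‖^2 + 2*(inner ℝ (ξ-η) η : ℝ) + ‖η‖^2 := by
    have h := norm_add_sq_real (ξ - η) η
    rw [sub_add_cancel] at h
    exact h
  have hxi : ‖ξ‖ ^ s = (‖ξ-η‖^2 + 2*(inner ℝ (ξ-η) η : ℝ) + ‖η‖^2) ^ (s/2) := by
    rw [← hnorm, sqr_rpow ‖ξ‖ (norm_nonneg ξ), show 2*(s/2) = s by ring]
  rw [hxi]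
  exact key_bound s hs ‖ξ-η‖ ‖η‖ _ (norm_nonneg _) (norm_nonneg _)
    (abs_real_inner_le_norm _ _)
end

section
/- There exists a constant C > 0 such that for all ξ, μ ∈ ℝ² one has | |ξ|² log(10+|μ|) − |ξ| |μ| √(log(10+|μ|)) √(log(10+|ξ|)) | ≤ C |ξ| |ξ−μ| log(10+|μ|) √(log(10+|ξ|)). -/
private lemma log_ge_one' {x : ℝ} (hx : 0 ≤ x) : 1 ≤ Real.log (10 + x) := by
  rw [Real.le_log_iff_exp_le (by linarith)]
  have := Real.exp_one_lt_d9
  linarith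

private lemma key' {a b : ℝ} (hb : 0 ≤ b) (hab : b ≤ a) :
    |a * Real.sqrt (Real.log (10 + b)) - b * Real.sqrt (Real.log (10 + a))|
      ≤ (a - b) * (Real.sqrt (Real.log (10 + b)) + 1) := by
  set A := Real.log (10 + a) with hAdef
  set B := Real.log (10 + b) with hBdef
  have ha : 0 ≤ a := le_trans hb hab
  have hB1 : 1 ≤ B := log_ge_one' hb
  have hA1 : 1 ≤ A := log_ge_one' ha
  have hBA : B ≤ A := Real.log_le_log (by linarith) (by linarith)
  have hsB : 1 ≤ Real.sqrt B := by
    rw [show (1:ℝ) = Real.sqrt 1 by simp]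
    exact Real.sqrt_le_sqrt hB1
  have hsA : 1 ≤ Real.sqrt A := by
    rw [show (1:ℝ) = Real.sqrt 1 by simp]
    exact Real.sqrt_le_sqrt hA1
  have hsBA : Real.sqrt B ≤ Real.sqrt A := Real.sqrt_le_sqrt hBA
  have hsqA : Real.sqrt A ^ 2 = A := Real.sq_sqrt (by linarith)
  have hsqB : Real.sqrt B ^ 2 = B := Real.sq_sqrt (by linarith)
  -- (A - B) * (10 + b) ≤ a - b
  have hAB : (A - B) * (10 + b) ≤ a - b := by
    have h1 : Real.log ((10 + a) / (10 + b)) ≤ (10 + a) / (10 + b) - 1 :=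
      Real.log_le_sub_one_of_pos (by positivity)
    rw [Real.log_div (by linarith) (by linarith)] at h1
    have h2 : (0:ℝ) < 10 + b := by linarith
    have h3 := mul_le_mul_of_nonneg_right h1 h2.le
    have h4 : ((10 + a) / (10 + b) - 1) * (10 + b) = a - b := by
      field_simp
      ring
    rw [h4] at h3
    linarith [h3]
  -- √A - √B ≤ A - B
  have h3 : Real.sqrt A - Real.sqrt B ≤ A - B := by
    nlinarith [hsB, hsBA, hsqA, hsqB]
  -- b * (√A - √B) ≤ a - b
  have hkey : b * (Real.sqrt A - Real.sqrt B) ≤ a - b := by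
    nlinarith [h3, hAB, mul_le_mul_of_nonneg_left h3 hb]
  have h5 : 0 ≤ b * (Real.sqrt A - Real.sqrt B) := by nlinarith
  have h6 : 0 ≤ (a - b) * Real.sqrt B := by nlinarith
  rw [show a * Real.sqrt B - b * Real.sqrt A
      = (a - b) * Real.sqrt B - b * (Real.sqrt A - Real.sqrt B) by ring, abs_le]
  constructor <;> nlinarith

/-- There exists `C > 0` such that for all `ξ, μ ∈ ℝ²`:
`| |ξ|² log(10+|μ|) − |ξ||μ| √(log(10+|μ|)) √(log(10+|ξ|)) |
  ≤ C |ξ| |ξ−μ| log(10+|μ|) √(log(10+|ξ|))`. -/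
theorem stmt_5 :
    ∃ C : ℝ, 0 < C ∧ ∀ ξ μ : EuclideanSpace ℝ (Fin 2),
      |‖ξ‖ ^ 2 * Real.log (10 + ‖μ‖)
          - ‖ξ‖ * ‖μ‖ * Real.sqrt (Real.log (10 + ‖μ‖)) * Real.sqrt (Real.log (10 + ‖ξ‖))|
        ≤ C * ‖ξ‖ * ‖ξ - μ‖ * Real.log (10 + ‖μ‖) * Real.sqrt (Real.log (10 + ‖ξ‖)) := by
  refine ⟨2, by norm_num, fun ξ μ => ?_⟩
  set a := ‖ξ‖ with hadef
  set b := ‖μ‖ with hbdef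
  have ha : 0 ≤ a := norm_nonneg _
  have hb : 0 ≤ b := norm_nonneg _
  set A := Real.log (10 + a) with hAdef
  set B := Real.log (10 + b) with hBdef
  have hA1 : 1 ≤ A := log_ge_one' ha
  have hB1 : 1 ≤ B := log_ge_one' hb
  have hsA : 1 ≤ Real.sqrt A := by
    rw [show (1:ℝ) = Real.sqrt 1 by simp]
    exact Real.sqrt_le_sqrt hA1
  have hsB : 1 ≤ Real.sqrt B := by
    rw [show (1:ℝ) = Real.sqrt 1 by simp]
    exact Real.sqrt_le_sqrt hB1
  have hsqA : Real.sqrt A ^ 2 = A := Real.sq_sqrt (by linarith)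
  have hsqB : Real.sqrt B ^ 2 = B := Real.sq_sqrt (by linarith)
  have hd : |a - b| ≤ ‖ξ - μ‖ := abs_norm_sub_norm_le ξ μ
  have hdn : 0 ≤ ‖ξ - μ‖ := norm_nonneg _
  have hfac : a ^ 2 * B - a * b * Real.sqrt B * Real.sqrt A
      = (a * Real.sqrt B) * (a * Real.sqrt B - b * Real.sqrt A) := by
    linear_combination (-(a ^ 2)) * hsqB
  have hBB : Real.sqrt B ≤ B := by nlinarith
  have hA0 : (0:ℝ) ≤ Real.sqrt A := Real.sqrt_nonneg _
  have hB0 : (0:ℝ) ≤ Real.sqrt B := Real.sqrt_nonneg _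
  rw [hfac, abs_mul, abs_of_nonneg (by positivity)]
  rcases le_total b a with h | h
  · have hk := key' hb h
    have hab : a - b ≤ ‖ξ - μ‖ := le_trans (le_abs_self _) hd
    have ht : 0 ≤ a * (a - b) := mul_nonneg ha (by linarith)
    calc a * Real.sqrt B * |a * Real.sqrt B - b * Real.sqrt A|
        ≤ a * Real.sqrt B * ((a - b) * (Real.sqrt B + 1)) :=
          mul_le_mul_of_nonneg_left hk (by positivity)
      _ = a * (a - b) * (B + Real.sqrt B) := by linear_combination (a * (a - b)) * hsqB
      _ ≤ 2 * a * (a - b) * B := by linarith [mul_nonneg ht (by linarith : (0:ℝ) ≤ B - Real.sqrt B)]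
      _ ≤ 2 * a * ‖ξ - μ‖ * B := by
          linarith [mul_nonneg (mul_nonneg (by linarith : (0:ℝ) ≤ ‖ξ - μ‖ - (a - b)) ha)
            (by linarith : (0:ℝ) ≤ B)]
      _ ≤ 2 * a * ‖ξ - μ‖ * B * Real.sqrt A := by
          linarith [mul_nonneg (mul_nonneg (mul_nonneg ha hdn) (by linarith : (0:ℝ) ≤ B))
            (by linarith : (0:ℝ) ≤ Real.sqrt A - 1)]
  · have hk := key' ha h
    rw [abs_sub_comm] at hk
    have hab : b - a ≤ ‖ξ - μ‖ := by
      rw [abs_sub_comm] at hd; exact le_trans (le_abs_self _) hd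
    have ht : 0 ≤ a * (b - a) := mul_nonneg ha (by linarith)
    have h1 : (0:ℝ) ≤ B * Real.sqrt A - Real.sqrt A * Real.sqrt B :=
      by nlinarith [mul_le_mul_of_nonneg_left hBB hA0]
    have h2 : (0:ℝ) ≤ B * Real.sqrt A - Real.sqrt B := by nlinarith
    calc a * Real.sqrt B * |a * Real.sqrt B - b * Real.sqrt A|
        ≤ a * Real.sqrt B * ((b - a) * (Real.sqrt A + 1)) :=
          mul_le_mul_of_nonneg_left hk (by positivity)
      _ ≤ 2 * a * (b - a) * B * Real.sqrt A := by
          linarith [mul_nonneg ht h1, mul_nonneg ht h2]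
      _ ≤ 2 * a * ‖ξ - μ‖ * B * Real.sqrt A := by
          linarith [mul_nonneg (mul_nonneg (mul_nonneg
            (by linarith : (0:ℝ) ≤ ‖ξ - μ‖ - (b - a)) ha) (by linarith : (0:ℝ) ≤ B)) hA0]
end

section
/- There exists a constant C > 0 such that for all δ ∈ (0,1), each j ∈ {1,2}, and all ξ, η ∈ ℝ², one has | ξ_j (1 − (10+|ξ|)^{−δ})^{1/2} − (ξ−η)_j (1 − (10+|ξ−η|)^{−δ})^{1/2} | ≤ C δ^{1/2} √(log(10+|ξ−η|)) |η| ( 1 + √(log(10+|η|)) ). -/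
open Real

lemma coord_le_norm (x : EuclideanSpace ℝ (Fin 2)) (j : Fin 2) : |x j| ≤ ‖x‖ := by
  rw [EuclideanSpace.norm_eq]
  have h1 : |x j| ^ 2 ≤ ∑ i, ‖x i‖ ^ 2 := by
    have := Finset.single_le_sum (f := fun i => ‖x i‖ ^ 2)
      (fun i _ => sq_nonneg _) (Finset.mem_univ j)
    simpa [Real.norm_eq_abs, sq_abs] using this
  calc |x j| = Real.sqrt (|x j| ^ 2) := by rw [Real.sqrt_sq_eq_abs, abs_abs]
    _ ≤ _ := Real.sqrt_le_sqrt h1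

lemma two_le_log_ten : (2:ℝ) ≤ Real.log 10 := by
  rw [Real.le_log_iff_exp_le (by norm_num)]
  have h := Real.exp_one_lt_d9
  have : Real.exp 2 = Real.exp 1 * Real.exp 1 := by
    rw [← Real.exp_add]; norm_num
  nlinarith [Real.exp_pos 1]

lemma rpow_as_exp {δ r : ℝ} (hr : 0 ≤ r) :
    (10 + r) ^ (-δ) = Real.exp (-(δ * Real.log (10 + r))) := by
  rw [Real.rpow_def_of_pos (by linarith)]; ring_nf

lemma X_le {δ r : ℝ} (hr : 0 ≤ r) :
    1 - (10 + r) ^ (-δ) ≤ δ * Real.log (10 + r) := by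
  rw [rpow_as_exp hr]
  have := Real.add_one_le_exp (-(δ * Real.log (10 + r)))
  linarith

lemma X_ge {δ r : ℝ} (hδ0 : 0 < δ) (hδ1 : δ < 1) (hr : 0 ≤ r) :
    2 * δ / 3 ≤ 1 - (10 + r) ^ (-δ) := by
  rw [rpow_as_exp hr]
  set x := δ * Real.log (10 + r) with hx
  have hlog : (2:ℝ) ≤ Real.log (10 + r) :=
    le_trans two_le_log_ten (Real.log_le_log (by norm_num) (by linarith))
  have hx2 : 2 * δ ≤ x := by
    rw [hx]; nlinarith
  have hE : (x + 1) * Real.exp (-x) ≤ 1 := by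
    have h1 := Real.add_one_le_exp x
    have h2 : Real.exp (-x) = (Real.exp x)⁻¹ := by rw [Real.exp_neg]
    rw [h2]
    rw [mul_inv_le_iff₀ (Real.exp_pos x)]
    linarith
  have hEpos : 0 < Real.exp (-x) := Real.exp_pos _
  nlinarith [mul_pos hδ0 hEpos, mul_nonneg (le_of_lt hδ0) (sub_nonneg.2 hx2)]

lemma rpow_diff_le {δ a b : ℝ} (hδ0 : 0 < δ) (ha : 0 ≤ a) (hab : a ≤ b) :
    (10 + b) ^ (-δ) ≤ (10 + a) ^ (-δ) ∧
    (10 + a) ^ (-δ) - (10 + b) ^ (-δ) ≤ δ * (b - a) / (10 + a) := by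
  have hb : (0:ℝ) ≤ b := le_trans ha hab
  constructor
  · exact Real.rpow_le_rpow_of_nonpos (by linarith) (by linarith) (by linarith)
  · rw [rpow_as_exp ha, rpow_as_exp hb]
    set s := Real.log (10 + a) with hs
    set t := Real.log (10 + b) with ht
    have hst : s ≤ t := Real.log_le_log (by linarith) (by linarith)
    have hsnn : 0 ≤ s := by
      rw [hs]; exact Real.log_nonneg (by linarith)
    have hfac : Real.exp (-(δ * t)) = Real.exp (-(δ * s)) * Real.exp (-(δ * (t - s))) := by
      rw [← Real.exp_add]; ring_nf
    have hE1 : Real.exp (-(δ * s)) ≤ 1 :=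
      Real.exp_le_one_iff.2 (by nlinarith)
    have hE1p : 0 < Real.exp (-(δ * s)) := Real.exp_pos _
    have hE2 : 1 - Real.exp (-(δ * (t - s))) ≤ δ * (t - s) := by
      have := Real.add_one_le_exp (-(δ * (t - s)))
      linarith
    have hE2nn : 0 ≤ 1 - Real.exp (-(δ * (t - s))) := by
      rw [sub_nonneg]
      exact Real.exp_le_one_iff.2 (by nlinarith)
    have hts : t - s ≤ (b - a) / (10 + a) := by
      have hlog : t - s ≤ (10 + b) / (10 + a) - 1 := by
        have h1 : t - s = Real.log ((10 + b) / (10 + a)) := by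
          rw [hs, ht, Real.log_div (by linarith) (by linarith)]
        rw [h1]
        exact Real.log_le_sub_one_of_pos (by positivity)
      have : (10 + b) / (10 + a) - 1 = (b - a) / (10 + a) := by
        field_simp
        ring
      linarith
    calc Real.exp (-(δ * s)) - Real.exp (-(δ * t))
        = Real.exp (-(δ * s)) * (1 - Real.exp (-(δ * (t - s)))) := by rw [hfac]; ring
      _ ≤ 1 * (δ * (t - s)) := by
          apply mul_le_mul hE1 hE2 hE2nn zero_le_one
      _ ≤ δ * (b - a) / (10 + a) := by
          rw [one_mul, mul_div_assoc]
          exact mul_le_mul_of_nonneg_left hts hδ0.le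

lemma sqrt_diff_eq {X Y : ℝ} (hX : 0 ≤ X) (hY : 0 ≤ Y) (hpos : 0 < Real.sqrt X + Real.sqrt Y) :
    |Real.sqrt X - Real.sqrt Y| = |X - Y| / (Real.sqrt X + Real.sqrt Y) := by
  rw [eq_div_iff hpos.ne', ← abs_of_pos hpos, ← abs_mul]
  congr 1
  have hx := Real.sq_sqrt hX
  have hy := Real.sq_sqrt hY
  linear_combination hx - hy

lemma rpow_diff_abs {δ a b c : ℝ} (hδ0 : 0 < δ) (ha : 0 ≤ a) (hb : 0 ≤ b)
    (hc : 0 ≤ c) (hca : c ≤ a) (hcb : c ≤ b) :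
    |(10 + a) ^ (-δ) - (10 + b) ^ (-δ)| ≤ δ * |a - b| / (10 + c) := by
  rcases le_total a b with hab | hab
  · obtain ⟨h1, h2⟩ := rpow_diff_le hδ0 ha hab
    rw [abs_of_nonneg (by linarith), abs_of_nonpos (by linarith)]
    calc (10 + a) ^ (-δ) - (10 + b) ^ (-δ) ≤ δ * (b - a) / (10 + a) := h2
      _ ≤ δ * (b - a) / (10 + c) :=
          div_le_div_of_nonneg_left (by nlinarith) (by linarith) (by linarith)
      _ = δ * -(a - b) / (10 + c) := by ring
  · obtain ⟨h1, h2⟩ := rpow_diff_le hδ0 hb hab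
    rw [abs_of_nonpos (by linarith), abs_of_nonneg (by linarith)]
    calc -((10 + a) ^ (-δ) - (10 + b) ^ (-δ))
        = (10 + b) ^ (-δ) - (10 + a) ^ (-δ) := by ring
      _ ≤ δ * (a - b) / (10 + b) := h2
      _ ≤ δ * (a - b) / (10 + c) :=
          div_le_div_of_nonneg_left (by nlinarith) (by linarith) (by linarith)


set_option maxHeartbeats 1000000

/-- Pointwise kernel bound behind the commutator estimate for
`[∂_j (I − (10+Λ)^{−δ})^{1/2}, f]`: there exists `C > 0` such that for all `δ ∈ (0,1)`,
each coordinate `j`, and all `ξ, η ∈ ℝ²`,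
`|ξ_j (1 − (10+|ξ|)^{−δ})^{1/2} − (ξ−η)_j (1 − (10+|ξ−η|)^{−δ})^{1/2}|
  ≤ C δ^{1/2} √(log(10+|ξ−η|)) |η| (1 + √(log(10+|η|)))`. -/
theorem stmt_14 :
    ∃ C : ℝ, 0 < C ∧ ∀ δ : ℝ, δ ∈ Set.Ioo (0:ℝ) 1 → ∀ j : Fin 2,
      ∀ ξ η : EuclideanSpace ℝ (Fin 2),
      |ξ j * Real.sqrt (1 - (10 + ‖ξ‖) ^ (-δ))
          - (ξ - η) j * Real.sqrt (1 - (10 + ‖ξ - η‖) ^ (-δ))|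
        ≤ C * δ ^ ((1:ℝ)/2) * Real.sqrt (Real.log (10 + ‖ξ - η‖)) * ‖η‖ *
            (1 + Real.sqrt (Real.log (10 + ‖η‖))) := by
  refine ⟨10, by norm_num, ?_⟩
  rintro δ ⟨hδ0, hδ1⟩ j ξ η
  have hrp : δ ^ ((1:ℝ)/2) = Real.sqrt δ := (Real.sqrt_eq_rpow δ).symm
  rw [hrp]
  set a := ‖ξ‖ with ha'
  set b := ‖ξ - η‖ with hb'
  set h := ‖η‖ with hh'
  have ha : 0 ≤ a := norm_nonneg _
  have hb : 0 ≤ b := norm_nonneg _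
  have hh : 0 ≤ h := norm_nonneg _
  have habs : |a - b| ≤ h := by
    have := abs_norm_sub_norm_le ξ (ξ - η)
    simpa using this
  set sδ := Real.sqrt δ with hsδ'
  have hsδpos : 0 < sδ := Real.sqrt_pos.2 hδ0
  have hsδsq : sδ ^ 2 = δ := Real.sq_sqrt hδ0.le
  set Xa := 1 - (10 + a) ^ (-δ) with hXa
  set Xb := 1 - (10 + b) ^ (-δ) with hXb
  have hXa1 : 2 * δ / 3 ≤ Xa := X_ge hδ0 hδ1 ha
  have hXb1 : 2 * δ / 3 ≤ Xb := X_ge hδ0 hδ1 hb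
  have hXa0 : 0 ≤ Xa := by linarith
  have hXb0 : 0 ≤ Xb := by linarith
  set La := Real.log (10 + a) with hLa'
  set Lb := Real.log (10 + b) with hLb'
  set Lh := Real.log (10 + h) with hLh'
  have hLb2 : (2:ℝ) ≤ Lb :=
    le_trans two_le_log_ten (Real.log_le_log (by norm_num) (by linarith))
  have hXa2 : Xa ≤ δ * La := X_le ha
  have hXb2 : Xb ≤ δ * Lb := X_le hb
  have hma_lo : (4/5) * sδ ≤ Real.sqrt Xa := by
    have hsq : ((4/5) * sδ) ^ 2 ≤ Xa := by nlinarith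
    calc (4/5) * sδ = Real.sqrt (((4/5) * sδ) ^ 2) :=
          (Real.sqrt_sq (by positivity)).symm
      _ ≤ Real.sqrt Xa := Real.sqrt_le_sqrt hsq
  have hmb_lo : (4/5) * sδ ≤ Real.sqrt Xb := by
    have hsq : ((4/5) * sδ) ^ 2 ≤ Xb := by nlinarith
    calc (4/5) * sδ = Real.sqrt (((4/5) * sδ) ^ 2) :=
          (Real.sqrt_sq (by positivity)).symm
      _ ≤ Real.sqrt Xb := Real.sqrt_le_sqrt hsq
  have hma_hi : Real.sqrt Xa ≤ sδ * Real.sqrt La := by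
    rw [hsδ', ← Real.sqrt_mul hδ0.le]
    exact Real.sqrt_le_sqrt hXa2
  have hmb_hi : Real.sqrt Xb ≤ sδ * Real.sqrt Lb := by
    rw [hsδ', ← Real.sqrt_mul hδ0.le]
    exact Real.sqrt_le_sqrt hXb2
  have hLb1 : (1:ℝ) ≤ Real.sqrt Lb := by
    rw [show (1:ℝ) = Real.sqrt 1 from Real.sqrt_one.symm]
    exact Real.sqrt_le_sqrt (by linarith)
  have hLhnn : (0:ℝ) ≤ Real.sqrt Lh := Real.sqrt_nonneg _
  have hLbnn : (0:ℝ) ≤ Real.sqrt Lb := Real.sqrt_nonneg _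
  have hj1 : |ξ j| ≤ a := coord_le_norm ξ j
  have hj2 : |(ξ - η) j| ≤ b := coord_le_norm _ j
  have hj3 : |η j| ≤ h := coord_le_norm η j
  have hsub : (ξ - η) j = ξ j - η j := rfl
  rcases le_or_gt (2 * h) a with hc | hc
  · -- near case: h ≤ a/2
    have hbge : a - h ≤ b := by cases' abs_le.1 habs with h1 h2; linarith
    have hdecomp : ξ j * Real.sqrt Xa - (ξ - η) j * Real.sqrt Xb
        = ξ j * (Real.sqrt Xa - Real.sqrt Xb) + η j * Real.sqrt Xb := by
      rw [hsub]; ring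
    have hdiffX : |Xa - Xb| ≤ δ * h / (10 + a/2) := by
      calc |Xa - Xb| = |(10 + a) ^ (-δ) - (10 + b) ^ (-δ)| := by
            rw [hXa, hXb, abs_sub_comm]; congr 1; ring
        _ ≤ δ * |a - b| / (10 + a/2) :=
            rpow_diff_abs hδ0 ha hb (by linarith) (by linarith) (by linarith)
        _ ≤ δ * h / (10 + a/2) := by
            gcongr
    have hsum : 0 < Real.sqrt Xa + Real.sqrt Xb := by linarith [hma_lo, Real.sqrt_nonneg Xb]
    have hT1 : |ξ j * (Real.sqrt Xa - Real.sqrt Xb)| ≤ (5/4) * sδ * h := by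
      rw [abs_mul, sqrt_diff_eq hXa0 hXb0 hsum]
      have hfrac : |Xa - Xb| / (Real.sqrt Xa + Real.sqrt Xb)
          ≤ (δ * h / (10 + a/2)) / ((8/5) * sδ) :=
        div_le_div₀ (by positivity) hdiffX (by positivity) (by linarith)
      calc |ξ j| * (|Xa - Xb| / (Real.sqrt Xa + Real.sqrt Xb))
          ≤ a * ((δ * h / (10 + a/2)) / ((8/5) * sδ)) :=
            mul_le_mul hj1 hfrac (by positivity) ha
        _ ≤ (5/4) * sδ * h := by
            rw [div_div, ← mul_div_assoc, div_le_iff₀ (by positivity), ← hsδsq]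
            nlinarith [mul_nonneg hh (sq_nonneg sδ)]
    have hT2 : |η j * Real.sqrt Xb| ≤ h * (sδ * Real.sqrt Lb) := by
      rw [abs_mul, abs_of_nonneg (Real.sqrt_nonneg _)]
      exact mul_le_mul hj3 hmb_hi (Real.sqrt_nonneg _) hh
    calc |ξ j * Real.sqrt Xa - (ξ - η) j * Real.sqrt Xb|
        ≤ |ξ j * (Real.sqrt Xa - Real.sqrt Xb)| + |η j * Real.sqrt Xb| := by
          rw [hdecomp]; exact abs_add_le _ _
      _ ≤ (5/4) * sδ * h + h * (sδ * Real.sqrt Lb) := add_le_add hT1 hT2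
      _ ≤ 10 * sδ * Real.sqrt Lb * h * (1 + Real.sqrt Lh) := by
          nlinarith [mul_nonneg (mul_nonneg hsδpos.le hh) (sub_nonneg.2 hLb1),
            mul_nonneg (mul_nonneg (mul_nonneg hsδpos.le hLbnn) hh) hLhnn]
  · -- far case: a < 2h
    have hble : b ≤ 3 * h := by cases' abs_le.1 habs with h1 h2; linarith
    have hLa_le : Real.sqrt La ≤ Real.sqrt 2 * Real.sqrt Lh := by
      have h1 : La ≤ 2 * Lh := by
        have h10 : (10:ℝ) + a ≤ (10 + h) ^ 2 := by nlinarith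
        calc La ≤ Real.log ((10 + h) ^ 2) := Real.log_le_log (by linarith) h10
          _ = 2 * Lh := by rw [Real.log_pow]; norm_num [hLh']
      calc Real.sqrt La ≤ Real.sqrt (2 * Lh) := Real.sqrt_le_sqrt h1
        _ = Real.sqrt 2 * Real.sqrt Lh := Real.sqrt_mul (by norm_num) _
    have hT1 : |ξ j * Real.sqrt Xa| ≤ 2 * h * (sδ * (Real.sqrt 2 * Real.sqrt Lh)) := by
      rw [abs_mul, abs_of_nonneg (Real.sqrt_nonneg _)]
      exact mul_le_mul (hj1.trans (by linarith))
        (hma_hi.trans (mul_le_mul_of_nonneg_left hLa_le hsδpos.le))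
        (Real.sqrt_nonneg _) (by linarith)
    have hT2 : |(ξ - η) j * Real.sqrt Xb| ≤ 3 * h * (sδ * Real.sqrt Lb) := by
      rw [abs_mul, abs_of_nonneg (Real.sqrt_nonneg _)]
      exact mul_le_mul (hj2.trans hble) hmb_hi (Real.sqrt_nonneg _) (by linarith)
    have hsqrt2 : Real.sqrt 2 ≤ 3/2 := by
      nlinarith [Real.sq_sqrt (by norm_num : (0:ℝ) ≤ 2), Real.sqrt_nonneg 2]
    calc |ξ j * Real.sqrt Xa - (ξ - η) j * Real.sqrt Xb|
        ≤ |ξ j * Real.sqrt Xa| + |(ξ - η) j * Real.sqrt Xb| := by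
          rw [sub_eq_add_neg]
          exact (abs_add_le _ _).trans (by rw [abs_neg])
      _ ≤ 2 * h * (sδ * (Real.sqrt 2 * Real.sqrt Lh)) + 3 * h * (sδ * Real.sqrt Lb) :=
          add_le_add hT1 hT2
      _ ≤ 10 * sδ * Real.sqrt Lb * h * (1 + Real.sqrt Lh) := by
          nlinarith [mul_nonneg (mul_nonneg (mul_nonneg hsδpos.le hh)
              (sub_nonneg.2 hLb1)) hLhnn,
            mul_nonneg (mul_nonneg (mul_nonneg hsδpos.le hh) hLbnn) hLhnn,
            mul_nonneg (mul_nonneg hsδpos.le hh) hLbnn,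
            mul_nonneg (mul_nonneg (mul_nonneg hsδpos.le hh) hLhnn)
              (sub_nonneg.2 hsqrt2)]
end

section
/- Let T > 0 and G > 0 be constants, let F : [0,T] → ℝ be continuous and nonnegative, and let ν > 0 satisfy 0 < 8 ν T G ∫₀ᵀ F(t) dt ≤ 1. Then every differentiable function y : [0,T] → ℝ with y(t) ≥ 0 for all t, y(0) = 0, and y′(t) ≤ ν F(t) + G y(t)² for all t ∈ [0,T], satisfies y(t) ≤ min { 3/(2TG), 12 ν ∫₀ᵀ F(t) dt } for all t ∈ [0,T]. -/
open MeasureTheory intervalIntegral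

/-- Comparison lemma (Constantin): let `T > 0`, `G > 0`, `F` continuous and nonnegative
on `[0,T]`, and `ν` with `0 < 8νTG ∫₀ᵀ F ≤ 1`. Then every differentiable `y ≥ 0` on `[0,T]`
with `y(0) = 0` and `y′ ≤ ν F + G y²` satisfies
`y(t) ≤ min { 3/(2TG), 12ν ∫₀ᵀ F }` on `[0,T]`. -/
theorem stmt_16 (T G ν : ℝ) (hT : 0 < T) (hG : 0 < G)
    (F : ℝ → ℝ) (hFc : ContinuousOn F (Set.Icc 0 T))
    (hFnn : ∀ t ∈ Set.Icc (0:ℝ) T, 0 ≤ F t)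
    (hν₁ : 0 < 8 * ν * T * G * ∫ t in (0:ℝ)..T, F t)
    (hν₂ : 8 * ν * T * G * (∫ t in (0:ℝ)..T, F t) ≤ 1)
    (y y' : ℝ → ℝ)
    (hy : ∀ t ∈ Set.Icc (0:ℝ) T, HasDerivAt y (y' t) t)
    (hynn : ∀ t ∈ Set.Icc (0:ℝ) T, 0 ≤ y t)
    (hy0 : y 0 = 0)
    (hyineq : ∀ t ∈ Set.Icc (0:ℝ) T, y' t ≤ ν * F t + G * y t ^ 2) :
    ∀ t ∈ Set.Icc (0:ℝ) T,
      y t ≤ min (3 / (2 * T * G)) (12 * ν * ∫ t in (0:ℝ)..T, F t) := by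
  set I : ℝ := ∫ t in (0:ℝ)..T, F t with hIdef
  have hI0 : 0 ≤ I := intervalIntegral.integral_nonneg hT.le (fun u hu => hFnn u hu)
  have hTG : 0 < T * G := mul_pos hT hG
  have hνI : 0 < ν * I := by nlinarith [hν₁]
  have hIpos : 0 < I := by
    rcases hI0.lt_or_eq with h | h
    · exact h
    · exfalso; rw [← h, mul_zero] at hνI; exact lt_irrefl 0 hνI
  have hνpos : 0 < ν := by nlinarith [hνI, hIpos]
  -- continuous extension of F
  set p : ℝ → ℝ := fun t => max 0 (min t T) with hpdef
  have hpcont : Continuous p := continuous_const.max (continuous_id.min continuous_const)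
  have hpmem : ∀ t, p t ∈ Set.Icc (0:ℝ) T :=
    fun t => ⟨le_max_left _ _, max_le hT.le (min_le_right _ _)⟩
  set Fe : ℝ → ℝ := fun t => F (p t) with hFedef
  have hFe : Continuous Fe := hFc.comp_continuous hpcont hpmem
  have hFeq : ∀ t ∈ Set.Icc (0:ℝ) T, Fe t = F t := by
    intro t ht
    simp only [hFedef, hpdef]
    rw [min_eq_left ht.2, max_eq_right ht.1]
  have hFenn : ∀ t, 0 ≤ Fe t := fun t => hFnn _ (hpmem t)
  set Φ : ℝ → ℝ := fun t => ∫ s in (0:ℝ)..t, Fe s with hΦdef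
  have hΦd : ∀ t : ℝ, HasDerivAt Φ (Fe t) t := by
    intro t
    exact intervalIntegral.integral_hasDerivAt_right (hFe.intervalIntegrable _ _)
      (hFe.stronglyMeasurableAtFilter _ _) hFe.continuousAt
  have hΦc : Continuous Φ := continuous_iff_continuousAt.mpr (fun t => (hΦd t).continuousAt)
  have hyc' : ContinuousOn y (Set.Icc 0 T) :=
    fun t ht => (hy t ht).continuousAt.continuousWithinAt
  -- main claim
  have key : ∀ t ∈ Set.Icc (0:ℝ) T, y t ≤ 3 * ν * I := by
    by_contra hcon
    push_neg at hcon
    obtain ⟨t₁, ht₁, hgt⟩ := hcon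
    set A : Set ℝ := {t | t ∈ Set.Icc (0:ℝ) T ∧ 3 * ν * I ≤ y t} with hAdef
    have hAne : A.Nonempty := ⟨t₁, ht₁, hgt.le⟩
    have hAbdd : BddBelow A := ⟨0, fun t ht => ht.1.1⟩
    set t₀ : ℝ := sInf A with ht₀def
    have ht₀mem : t₀ ∈ Set.Icc (0:ℝ) T :=
      ⟨le_csInf hAne (fun t ht => ht.1.1),
       le_trans (csInf_le hAbdd ⟨ht₁, hgt.le⟩) ht₁.2⟩
    have hyc : ContinuousAt y t₀ := (hy t₀ ht₀mem).continuousAt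
    have ht₀cl : t₀ ∈ closure A := csInf_mem_closure hAne hAbdd
    have hyt₀ : 3 * ν * I ≤ y t₀ := by
      have h1 : y t₀ ∈ closure (y '' A) :=
        hyc.continuousWithinAt.mem_closure_image ht₀cl
      have h2 : closure (y '' A) ⊆ Set.Ici (3 * ν * I) := by
        apply closure_minimal _ isClosed_Ici
        rintro _ ⟨t, ht, rfl⟩
        exact ht.2
      exact h2 h1
    have hlt : ∀ s, 0 ≤ s → s < t₀ → y s < 3 * ν * I := by
      intro s hs0 hst
      by_contra hns
      push_neg at hns
      exact absurd (csInf_le hAbdd ⟨⟨hs0, hst.le.trans ht₀mem.2⟩, hns⟩) (not_le.mpr hst)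
    set C : ℝ := 9 * G * ν ^ 2 * I ^ 2 with hCdef
    have hC0 : 0 ≤ C := by positivity
    set g : ℝ → ℝ := fun t => ν * Φ t + C * t - y t with hgdef
    have hsub : Set.Icc (0:ℝ) t₀ ⊆ Set.Icc (0:ℝ) T :=
      Set.Icc_subset_Icc le_rfl ht₀mem.2
    have hgd : ∀ t ∈ Set.Icc (0:ℝ) T, HasDerivAt g (ν * Fe t + C - y' t) t := by
      intro t ht
      have h1 : HasDerivAt (fun u => ν * Φ u + C * u) (ν * Fe t + C) t := by
        have := ((hΦd t).const_mul ν).add ((hasDerivAt_id t).const_mul C)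
        simp only [mul_one] at this
        exact this
      exact h1.sub (hy t ht)
    have hgc : ContinuousOn g (Set.Icc (0:ℝ) t₀) := by
      apply ContinuousOn.sub
      · exact ((continuous_const.mul hΦc).add (continuous_const.mul continuous_id)).continuousOn
      · exact hyc'.mono hsub
    have hmono : MonotoneOn g (Set.Icc (0:ℝ) t₀) := by
      apply monotoneOn_of_deriv_nonneg (convex_Icc _ _) hgc
      · intro t ht
        rw [interior_Icc] at ht
        exact (hgd t ⟨ht.1.le, ht.2.le.trans ht₀mem.2⟩).differentiableAt.differentiableWithinAt
      · intro t ht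
        rw [interior_Icc] at ht
        have htT : t ∈ Set.Icc (0:ℝ) T := ⟨ht.1.le, ht.2.le.trans ht₀mem.2⟩
        rw [(hgd t htT).deriv]
        have h1 := hyineq t htT
        have h2 : y t < 3 * ν * I := hlt t ht.1.le ht.2
        have h3 : 0 ≤ y t := hynn t htT
        rw [← hFeq t htT] at h1
        have h4 : y t ^ 2 ≤ (3 * ν * I) ^ 2 := by nlinarith
        nlinarith [mul_le_mul_of_nonneg_left h4 hG.le]
    have hg0 : g 0 = 0 := by
      simp [hgdef, hΦdef, hy0]
    have hkey : y t₀ ≤ ν * Φ t₀ + C * t₀ := by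
      have := hmono (Set.left_mem_Icc.mpr ht₀mem.1) (Set.right_mem_Icc.mpr ht₀mem.1) ht₀mem.1
      rw [hg0] at this
      simp only [hgdef] at this
      linarith
    have hΦle : Φ t₀ ≤ I := by
      have h1 : (∫ s in (0:ℝ)..T, Fe s) = I := by
        rw [hIdef]
        apply intervalIntegral.integral_congr
        intro s hs
        rw [Set.uIcc_of_le hT.le] at hs
        exact hFeq s hs
      have h2 : Φ t₀ + ∫ s in t₀..T, Fe s = ∫ s in (0:ℝ)..T, Fe s :=
        intervalIntegral.integral_add_adjacent_intervals (hFe.intervalIntegrable _ _)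
          (hFe.intervalIntegrable _ _)
      have h3 : 0 ≤ ∫ s in t₀..T, Fe s :=
        intervalIntegral.integral_nonneg ht₀mem.2 (fun s _ => hFenn s)
      linarith
    have hCt : C * t₀ ≤ C * T := mul_le_mul_of_nonneg_left ht₀mem.2 hC0
    have hprod : 8 * ν * T * G * I * (ν * I) ≤ 1 * (ν * I) :=
      mul_le_mul_of_nonneg_right hν₂ hνI.le
    nlinarith [hkey, hΦle, hCt, hyt₀, hνI, hνpos.le, hprod,
      mul_le_mul_of_nonneg_left hΦle hνpos.le]
  intro t ht
  have h1 := key t ht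
  apply le_min
  · have h2 : 12 * ν * I ≤ 3 / (2 * T * G) := by
      rw [le_div_iff₀ (by positivity)]
      nlinarith
    linarith [hνI]
  · linarith [hνI]
end

section
/- Let s ∈ ℝ, let f : ℝ² → ℂ and v : ℝ² → ℂ² be measurable functions satisfying the conjugate symmetries f(−ξ) = conj(f(ξ)) and v(−ζ) = conj(v(ζ)) for all ξ, ζ ∈ ℝ², and suppose v(ζ)·ζ = 0 for all ζ ∈ ℝ² (divergence-free condition on the Fourier side). Assume moreover that (ξ,η) ↦ |ξ|^s |η|^{s+1} |f(ξ)| |f(η)| |v(ξ−η)| is integrable on ℝ² × ℝ². Then Re ∬_{ℝ²×ℝ²} |ξ|^s conj(f(ξ)) |η|^s ( v(ξ−η) · iη ) f(η) dη dξ = 0. -/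
open MeasureTheory

private lemma comp_le_norm {n : Type*} [Fintype n] (x : EuclideanSpace ℂ n) (i : n) :
    ‖x i‖ ≤ ‖x‖ := by
  rw [EuclideanSpace.norm_eq]
  have h : ‖x i‖ = Real.sqrt (‖x i‖ ^ 2) := (Real.sqrt_sq (norm_nonneg _)).symm
  rw [h]
  exact Real.sqrt_le_sqrt (Finset.single_le_sum (f := fun j => ‖x j‖ ^ 2)
    (fun j _ => sq_nonneg _) (Finset.mem_univ i))

private lemma comp_le_norm' {n : Type*} [Fintype n] (x : EuclideanSpace ℝ n) (i : n) :
    |x i| ≤ ‖x‖ := by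
  rw [EuclideanSpace.norm_eq]
  have h : |x i| = Real.sqrt (|x i| ^ 2) := (Real.sqrt_sq (abs_nonneg _)).symm
  rw [h]
  simpa [Real.norm_eq_abs] using Real.sqrt_le_sqrt (Finset.single_le_sum
    (f := fun j => ‖x j‖ ^ 2) (fun j _ => sq_nonneg _) (Finset.mem_univ i))

/-- Vanishing of the highest-order transport term: if `f : ℝ² → ℂ` and `v : ℝ² → ℂ²` are
measurable, satisfy the conjugate symmetries `f(−ξ) = conj f(ξ)`, `v(−ζ) = conj v(ζ)`,
`v` is divergence-free on the Fourier side (`v(ζ)·ζ = 0`), and the stated product bound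
(with `|v|` the Euclidean norm of `v` on `ℂ²`) is integrable on `ℝ²×ℝ²`, then
`Re ∬ |ξ|^s conj(f(ξ)) |η|^s (v(ξ−η)·iη) f(η) dη dξ = 0`. -/
theorem stmt_17 (s : ℝ) (f : EuclideanSpace ℝ (Fin 2) → ℂ)
    (v : EuclideanSpace ℝ (Fin 2) → Fin 2 → ℂ)
    (hfm : Measurable f) (hvm : Measurable v)
    (hf : ∀ ξ, f (-ξ) = starRingEnd ℂ (f ξ))
    (hv : ∀ ζ, ∀ j : Fin 2, v (-ζ) j = starRingEnd ℂ (v ζ j))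
    (hdiv : ∀ ζ : EuclideanSpace ℝ (Fin 2), (∑ j : Fin 2, v ζ j * (ζ j : ℂ)) = 0)
    (hint : Integrable (fun p : EuclideanSpace ℝ (Fin 2) × EuclideanSpace ℝ (Fin 2) =>
      ‖p.1‖ ^ s * ‖p.2‖ ^ (s + 1) * ‖f p.1‖ * ‖f p.2‖ *
        ‖(WithLp.equiv 2 (Fin 2 → ℂ)).symm (v (p.1 - p.2))‖)) :
    (∫ ξ : EuclideanSpace ℝ (Fin 2), ∫ η : EuclideanSpace ℝ (Fin 2),
        ((‖ξ‖ ^ s : ℝ) : ℂ) * starRingEnd ℂ (f ξ) * ((‖η‖ ^ s : ℝ) : ℂ) *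
          (Complex.I * ∑ j : Fin 2, v (ξ - η) j * ((η j : ℝ) : ℂ)) * f η).re = 0 := by
  let F : EuclideanSpace ℝ (Fin 2) × EuclideanSpace ℝ (Fin 2) → ℂ := fun p =>
    ((‖p.1‖ ^ s : ℝ) : ℂ) * starRingEnd ℂ (f p.1) * ((‖p.2‖ ^ s : ℝ) : ℂ) *
      (Complex.I * ∑ j : Fin 2, v (p.1 - p.2) j * ((p.2 j : ℝ) : ℂ)) * f p.2
  -- sum bound
  have hSbound : ∀ ξ η : EuclideanSpace ℝ (Fin 2),
      ‖∑ j : Fin 2, v (ξ - η) j * ((η j : ℝ) : ℂ)‖ ≤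
      2 * ‖(WithLp.equiv 2 (Fin 2 → ℂ)).symm (v (ξ - η))‖ * ‖η‖ := by
    intro ξ η
    calc ‖∑ j : Fin 2, v (ξ - η) j * ((η j : ℝ) : ℂ)‖
        ≤ ∑ j : Fin 2, ‖v (ξ - η) j * ((η j : ℝ) : ℂ)‖ := norm_sum_le _ _
      _ ≤ ∑ _j : Fin 2, ‖(WithLp.equiv 2 (Fin 2 → ℂ)).symm (v (ξ - η))‖ * ‖η‖ := by
          apply Finset.sum_le_sum
          intro j _
          rw [norm_mul]
          have h1 : ‖v (ξ - η) j‖ ≤ ‖(WithLp.equiv 2 (Fin 2 → ℂ)).symm (v (ξ - η))‖ :=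
            comp_le_norm ((WithLp.equiv 2 (Fin 2 → ℂ)).symm (v (ξ - η))) j
          have h2 : ‖((η j : ℝ) : ℂ)‖ ≤ ‖η‖ := by
            rw [Complex.norm_real, Real.norm_eq_abs]; exact comp_le_norm' η j
          exact mul_le_mul h1 h2 (norm_nonneg _) (norm_nonneg _)
      _ = 2 * ‖(WithLp.equiv 2 (Fin 2 → ℂ)).symm (v (ξ - η))‖ * ‖η‖ := by
          simp [Finset.sum_const]; ring
  -- measurability
  have hFm : AEStronglyMeasurable F (volume.prod volume) := by
    apply Measurable.aestronglyMeasurable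
    have h1 : Measurable fun p : EuclideanSpace ℝ (Fin 2) × EuclideanSpace ℝ (Fin 2) =>
        ((‖p.1‖ ^ s : ℝ) : ℂ) :=
      Complex.measurable_ofReal.comp ((measurable_norm.comp measurable_fst).pow_const s)
    have h2 : Measurable fun p : EuclideanSpace ℝ (Fin 2) × EuclideanSpace ℝ (Fin 2) =>
        starRingEnd ℂ (f p.1) :=
      Complex.continuous_conj.measurable.comp (hfm.comp measurable_fst)
    have h3 : Measurable fun p : EuclideanSpace ℝ (Fin 2) × EuclideanSpace ℝ (Fin 2) =>
        ((‖p.2‖ ^ s : ℝ) : ℂ) :=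
      Complex.measurable_ofReal.comp ((measurable_norm.comp measurable_snd).pow_const s)
    have h4 : Measurable fun p : EuclideanSpace ℝ (Fin 2) × EuclideanSpace ℝ (Fin 2) =>
        ∑ j : Fin 2, v (p.1 - p.2) j * ((p.2 j : ℝ) : ℂ) := by
      apply Finset.measurable_sum
      intro j _
      have hv1 : Measurable fun p : EuclideanSpace ℝ (Fin 2) × EuclideanSpace ℝ (Fin 2) =>
          v (p.1 - p.2) j :=
        (measurable_pi_apply j).comp (hvm.comp (measurable_fst.sub measurable_snd))
      have hv2 : Measurable fun p : EuclideanSpace ℝ (Fin 2) × EuclideanSpace ℝ (Fin 2) =>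
          ((p.2 j : ℝ) : ℂ) :=
        Complex.measurable_ofReal.comp
          ((measurable_pi_apply (X := fun _ : Fin 2 => ℝ) j).comp
            ((WithLp.measurable_ofLp ..).comp measurable_snd))
      exact hv1.mul hv2
    have h5 : Measurable fun p : EuclideanSpace ℝ (Fin 2) × EuclideanSpace ℝ (Fin 2) =>
        f p.2 := hfm.comp measurable_snd
    exact ((((h1.mul h2).mul h3).mul (h4.const_mul _)).mul h5)
  -- integrability
  have hFi : Integrable F (volume.prod volume) := by
    refine (hint.const_mul 2).mono' hFm (Filter.Eventually.of_forall fun p => ?_)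
    obtain ⟨ξ, η⟩ := p
    have hA : (0:ℝ) ≤ ‖ξ‖ ^ s := Real.rpow_nonneg (norm_nonneg _) _
    have hC : (0:ℝ) ≤ ‖η‖ ^ s := Real.rpow_nonneg (norm_nonneg _) _
    have hCη : ‖η‖ ^ s * ‖η‖ ≤ ‖η‖ ^ (s + 1) := by
      rcases eq_or_lt_of_le (norm_nonneg η) with h | h
      · rw [← h]; simp; positivity
      · rw [Real.rpow_add h, Real.rpow_one]
    have hD := hSbound ξ η
    have hnF : ‖F (ξ, η)‖ = ‖ξ‖ ^ s * ‖f ξ‖ * ‖η‖ ^ s *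
        ‖∑ j : Fin 2, v (ξ - η) j * ((η j : ℝ) : ℂ)‖ * ‖f η‖ := by
      simp only [F, norm_mul, Complex.norm_real, Real.norm_eq_abs, abs_of_nonneg hA,
        abs_of_nonneg hC, Complex.norm_I, RCLike.norm_conj, one_mul]
    rw [hnF]
    have hV : (0:ℝ) ≤ ‖(WithLp.equiv 2 (Fin 2 → ℂ)).symm (v (ξ - η))‖ := norm_nonneg _
    calc ‖ξ‖ ^ s * ‖f ξ‖ * ‖η‖ ^ s *
        ‖∑ j : Fin 2, v (ξ - η) j * ((η j : ℝ) : ℂ)‖ * ‖f η‖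
        ≤ ‖ξ‖ ^ s * ‖f ξ‖ * ‖η‖ ^ s *
          (2 * ‖(WithLp.equiv 2 (Fin 2 → ℂ)).symm (v (ξ - η))‖ * ‖η‖) * ‖f η‖ := by
          gcongr
      _ = 2 * (‖ξ‖ ^ s * (‖η‖ ^ s * ‖η‖) * ‖f ξ‖ * ‖f η‖ *
          ‖(WithLp.equiv 2 (Fin 2 → ℂ)).symm (v (ξ - η))‖) := by ring
      _ ≤ 2 * (‖ξ‖ ^ s * ‖η‖ ^ (s + 1) * ‖f ξ‖ * ‖f η‖ *
          ‖(WithLp.equiv 2 (Fin 2 → ℂ)).symm (v (ξ - η))‖) := by gcongr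

  -- key pointwise symmetry
  have hkey : ∀ p : EuclideanSpace ℝ (Fin 2) × EuclideanSpace ℝ (Fin 2),
      starRingEnd ℂ (F (p.2, p.1)) = - F p := by
    rintro ⟨ξ, η⟩
    have hsum : ∀ j : Fin 2, starRingEnd ℂ (v (η - ξ) j) = v (ξ - η) j := by
      intro j
      have h := hv (η - ξ) j
      rw [neg_sub] at h
      rw [← h]
    have hdiv' : ∑ j : Fin 2, v (ξ - η) j * ((ξ j : ℝ) : ℂ) =
        ∑ j : Fin 2, v (ξ - η) j * ((η j : ℝ) : ℂ) := by
      have h0 := hdiv (ξ - η)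
      have hs : ∑ j : Fin 2, v (ξ - η) j * (((ξ - η) j : ℝ) : ℂ) =
          ∑ j : Fin 2, v (ξ - η) j * ((ξ j : ℝ) : ℂ) -
          ∑ j : Fin 2, v (ξ - η) j * ((η j : ℝ) : ℂ) := by
        rw [← Finset.sum_sub_distrib]
        apply Finset.sum_congr rfl
        intro j _
        rw [PiLp.sub_apply]
        push_cast
        ring
      rw [hs] at h0
      exact sub_eq_zero.mp h0
    show starRingEnd ℂ (((‖η‖ ^ s : ℝ) : ℂ) * starRingEnd ℂ (f η) * ((‖ξ‖ ^ s : ℝ) : ℂ) *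
        (Complex.I * ∑ j : Fin 2, v (η - ξ) j * ((ξ j : ℝ) : ℂ)) * f ξ) = - F (ξ, η)
    simp only [map_mul, map_sum, Complex.conj_conj, Complex.conj_ofReal, Complex.conj_I]
    simp only [hsum]
    rw [hdiv']
    show _ = -(((‖ξ‖ ^ s : ℝ) : ℂ) * starRingEnd ℂ (f ξ) * ((‖η‖ ^ s : ℝ) : ℂ) *
      (Complex.I * ∑ j : Fin 2, v (ξ - η) j * ((η j : ℝ) : ℂ)) * f η)
    ring
  -- assemble
  rw [MeasureTheory.integral_integral hFi]
  have hswap : ∫ p, starRingEnd ℂ (F p) ∂(volume.prod volume) =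
      ∫ p, starRingEnd ℂ (F (p.2, p.1)) ∂((volume : Measure (EuclideanSpace ℝ (Fin 2))).prod volume) := by
    have := (Measure.measurePreserving_swap
      (μ := (volume : Measure (EuclideanSpace ℝ (Fin 2)))) (ν := volume)).integral_comp
      (MeasurableEquiv.prodComm).measurableEmbedding
      (fun q => starRingEnd ℂ (F q))
    exact this.symm
  have hconj : starRingEnd ℂ (∫ p, F p ∂(volume.prod volume)) =
      - ∫ p, F p ∂(volume.prod volume) := by
    rw [← integral_conj, hswap]
    simp_rw [hkey]
    rw [integral_neg]
  have hre := congrArg Complex.re hconj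
  simp only [Complex.conj_re, Complex.neg_re] at hre
  linarith
end

section
/- Let s ∈ ℝ and let f : ℝ² → ℂ be a measurable function satisfying f(−ξ) = conj(f(ξ)) for all ξ ∈ ℝ². Set w(ξ) = |ξ|^s √(log(10+|ξ|)), and assume that (ξ,η) ↦ w(ξ) w(ξ−η) |ξ| |η| |f(ξ)| |f(ξ−η)| |f(η)| is integrable on ℝ² × ℝ². Then Re ∬_{ℝ²×ℝ²} w(ξ) conj(f(ξ)) w(ξ−η) f(ξ−η) ( (ξ−η)^⊥ · η ) f(η) dη dξ = 0. -/
open MeasureTheory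

/-- The perpendicular dot product on `ℝ²`: `ζ^⊥ · η` where `ζ^⊥ = (−ζ₂, ζ₁)`. -/
def perpDot (ζ η : EuclideanSpace ℝ (Fin 2)) : ℝ :=
  ζ 0 * η 1 - ζ 1 * η 0

lemma perpDot_sub_right (ξ η : EuclideanSpace ℝ (Fin 2)) :
    perpDot (ξ - η) η = perpDot ξ η := by
  simp only [perpDot, PiLp.sub_apply]; ring

lemma abs_perpDot_le (ξ η : EuclideanSpace ℝ (Fin 2)) :
    |perpDot ξ η| ≤ ‖ξ‖ * ‖η‖ := by
  have hξ : ‖ξ‖ = Real.sqrt (ξ 0 ^ 2 + ξ 1 ^ 2) := by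
    simp [EuclideanSpace.norm_eq, Fin.sum_univ_two, Real.norm_eq_abs, sq_abs]
  have hη : ‖η‖ = Real.sqrt (η 0 ^ 2 + η 1 ^ 2) := by
    simp [EuclideanSpace.norm_eq, Fin.sum_univ_two, Real.norm_eq_abs, sq_abs]
  have h1 : |perpDot ξ η| = Real.sqrt ((perpDot ξ η) ^ 2) :=
    (Real.sqrt_sq_eq_abs _).symm
  rw [h1, hξ, hη, ← Real.sqrt_mul (by positivity)]
  apply Real.sqrt_le_sqrt
  have h2 := sq_nonneg (ξ 0 * η 0 + ξ 1 * η 1)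
  simp only [perpDot]
  nlinarith [h2]

lemma euclidean_measurable_apply (i : Fin 2) :
    Measurable fun ξ : EuclideanSpace ℝ (Fin 2) => ξ i :=
  (EuclideanSpace.proj (𝕜 := ℝ) i).continuous.measurable

/-- Cancellation corresponding to the antisymmetry of
`log^{1/2}(10+Λ)∇θ · ∇^⊥ log^{1/2}(10+Λ)` for real-valued `θ`: with
`w(ξ) = |ξ|^s √(log(10+|ξ|))` and `f` conjugate-symmetric, under the stated integrability,
`Re ∬ w(ξ) conj(f(ξ)) w(ξ−η) f(ξ−η) ((ξ−η)^⊥·η) f(η) dη dξ = 0`. -/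
theorem stmt_18 (s : ℝ) (f : EuclideanSpace ℝ (Fin 2) → ℂ)
    (hfm : Measurable f)
    (hf : ∀ ξ, f (-ξ) = starRingEnd ℂ (f ξ))
    (w : EuclideanSpace ℝ (Fin 2) → ℝ)
    (hw : ∀ ξ, w ξ = ‖ξ‖ ^ s * Real.sqrt (Real.log (10 + ‖ξ‖)))
    (hint : Integrable (fun p : EuclideanSpace ℝ (Fin 2) × EuclideanSpace ℝ (Fin 2) =>
      w p.1 * w (p.1 - p.2) * ‖p.1‖ * ‖p.2‖ * ‖f p.1‖ * ‖f (p.1 - p.2)‖ * ‖f p.2‖)) :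
    (∫ ξ : EuclideanSpace ℝ (Fin 2), ∫ η : EuclideanSpace ℝ (Fin 2),
        ((w ξ : ℝ) : ℂ) * starRingEnd ℂ (f ξ) * ((w (ξ - η) : ℝ) : ℂ) * f (ξ - η) *
          ((perpDot (ξ - η) η : ℝ) : ℂ) * f η).re = 0 := by
  set F : EuclideanSpace ℝ (Fin 2) → EuclideanSpace ℝ (Fin 2) → ℂ := fun ξ η =>
    ((w ξ : ℝ) : ℂ) * starRingEnd ℂ (f ξ) * ((w (ξ - η) : ℝ) : ℂ) * f (ξ - η) *
      ((perpDot (ξ - η) η : ℝ) : ℂ) * f η with hF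
  -- nonnegativity of w
  have hw0 : ∀ ξ : EuclideanSpace ℝ (Fin 2), 0 ≤ w ξ := by
    intro ξ
    rw [hw]
    have h : (0 : ℝ) ≤ ‖ξ‖ ^ s := Real.rpow_nonneg (norm_nonneg _) _
    positivity
  -- w is even
  have hweven : ∀ ξ : EuclideanSpace ℝ (Fin 2), w (-ξ) = w ξ := by
    intro ξ; rw [hw, hw, norm_neg]
  -- measurability of w
  have hwm : Measurable w := by
    have heq : w = fun ξ : EuclideanSpace ℝ (Fin 2) =>
        (if ‖ξ‖ = 0 then (if s = 0 then (1 : ℝ) else 0)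
          else Real.exp (Real.log ‖ξ‖ * s)) * Real.sqrt (Real.log (10 + ‖ξ‖)) := by
      funext ξ
      rw [hw ξ, Real.rpow_def_of_nonneg (norm_nonneg ξ)]
    rw [heq]
    have hms : MeasurableSet {ξ : EuclideanSpace ℝ (Fin 2) | ‖ξ‖ = 0} :=
      measurable_norm (measurableSet_singleton (0 : ℝ))
    exact (Measurable.ite hms measurable_const
      (Real.measurable_exp.comp ((Real.measurable_log.comp measurable_norm).mul_const s))).mul
      ((Real.measurable_log.comp (measurable_const.add measurable_norm)).sqrt)
  -- key antisymmetry: F (η - ξ) η = - F ξ η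
  have key : ∀ ξ η : EuclideanSpace ℝ (Fin 2), F (η - ξ) η = - F ξ η := by
    intro ξ η
    have e1 : η - ξ - η = -ξ := by abel
    have e2 : η - ξ = -(ξ - η) := by abel
    have e3 : perpDot (-ξ) η = - perpDot (ξ - η) η := by
      simp only [perpDot, PiLp.neg_apply, PiLp.sub_apply]; ring
    simp only [hF]
    rw [e1, e2, hweven, hweven, hf, hf, e3, Complex.conj_conj]
    push_cast
    ring
  -- measurability of uncurried F
  have hFm : Measurable (Function.uncurry F) := by
    have hm1 : Measurable fun p : EuclideanSpace ℝ (Fin 2) × EuclideanSpace ℝ (Fin 2) =>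
        p.1 - p.2 := measurable_fst.sub measurable_snd
    have hmP : Measurable fun p : EuclideanSpace ℝ (Fin 2) × EuclideanSpace ℝ (Fin 2) =>
        perpDot (p.1 - p.2) p.2 := by
      apply Measurable.sub
      · exact (((euclidean_measurable_apply 0).comp hm1).mul
          ((euclidean_measurable_apply 1).comp measurable_snd))
      · exact (((euclidean_measurable_apply 1).comp hm1).mul
          ((euclidean_measurable_apply 0).comp measurable_snd))
    exact ((((((Complex.measurable_ofReal.comp (hwm.comp measurable_fst)).mul
      ((RCLike.continuous_conj (K := ℂ)).measurable.comp (hfm.comp measurable_fst))).mul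
      (Complex.measurable_ofReal.comp (hwm.comp hm1))).mul
      (hfm.comp hm1)).mul
      (Complex.measurable_ofReal.comp hmP)).mul
      (hfm.comp measurable_snd))
  -- integrability of uncurried F
  have hFi : Integrable (Function.uncurry F) (volume.prod volume) := by
    refine Integrable.mono' (g := fun p : EuclideanSpace ℝ (Fin 2) × EuclideanSpace ℝ (Fin 2) =>
      w p.1 * w (p.1 - p.2) * ‖p.1‖ * ‖p.2‖ * ‖f p.1‖ * ‖f (p.1 - p.2)‖ * ‖f p.2‖)
      ?_ hFm.aestronglyMeasurable ?_
    · have h := hint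
      rwa [Measure.volume_eq_prod] at h
    · refine Filter.Eventually.of_forall fun p => ?_
      have hnorm : ‖Function.uncurry F p‖ =
          w p.1 * w (p.1 - p.2) * |perpDot (p.1 - p.2) p.2| *
            (‖f p.1‖ * ‖f (p.1 - p.2)‖ * ‖f p.2‖) := by
        simp only [Function.uncurry, hF, norm_mul, Complex.norm_real,
          Real.norm_eq_abs, RCLike.norm_conj, abs_of_nonneg (hw0 _)]
        ring
      rw [hnorm]
      have hP : |perpDot (p.1 - p.2) p.2| ≤ ‖p.1‖ * ‖p.2‖ := by
        rw [perpDot_sub_right]; exact abs_perpDot_le _ _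
      calc w p.1 * w (p.1 - p.2) * |perpDot (p.1 - p.2) p.2| *
            (‖f p.1‖ * ‖f (p.1 - p.2)‖ * ‖f p.2‖)
          ≤ w p.1 * w (p.1 - p.2) * (‖p.1‖ * ‖p.2‖) *
            (‖f p.1‖ * ‖f (p.1 - p.2)‖ * ‖f p.2‖) := by
            exact mul_le_mul_of_nonneg_right
              (mul_le_mul_of_nonneg_left hP (mul_nonneg (hw0 _) (hw0 _)))
              (by positivity)
        _ = w p.1 * w (p.1 - p.2) * ‖p.1‖ * ‖p.2‖ * ‖f p.1‖ * ‖f (p.1 - p.2)‖ * ‖f p.2‖ := by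
            ring
  -- the inner ξ-integral (for fixed η) vanishes
  have hinner : ∀ η : EuclideanSpace ℝ (Fin 2), (∫ ξ, F ξ η) = 0 := by
    intro η
    have h1 : (∫ ξ, F (η - ξ) η) = ∫ ξ, F ξ η :=
      integral_sub_left_eq_self (fun ξ => F ξ η) volume η
    have h2 : (∫ ξ, F (η - ξ) η) = - ∫ ξ, F ξ η := by
      simp_rw [key]; exact integral_neg _
    have h3 : (∫ ξ, F ξ η) = - ∫ ξ, F ξ η := h1.symm.trans h2
    linear_combination h3 / 2
  -- Fubini and conclude
  have hswap : (∫ ξ, ∫ η, F ξ η) = ∫ η, ∫ ξ, F ξ η :=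
    integral_integral_swap hFi
  have hzero : (∫ ξ, ∫ η, F ξ η) = 0 := by
    rw [hswap]
    simp [hinner]
  rw [hF] at hzero
  rw [hzero]
  simp
end
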